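/- Let A be a finitely generated commutative algebra over an infinite field K and let φ : A → A be a K-algebra automorphism. Then there exist a natural number N, a surjective K-algebra homomorphism ν : K[x₁, …, x_N] → A, and a K-algebra automorphism φ̃ of K[x₁, …, x_N] such that: (1) ν ∘ φ̃^n = φ^n ∘ ν for all integers n; and (2) for all ideals I and J of A and all integers n, φ^n(I) ⊇ J if and only if φ̃^n(ν^{−1}(I)) ⊇ ν^{−1}(J). -/

import Mathlib

open MvPolynomial Function

namespace Stmt17Aux

variable {K : Type*} [CommRing K] {m : ℕ}

noncomputable def uR (c : Fin m → MvPolynomial (Fin m) K) :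
    MvPolynomial (Fin m ⊕ Fin m) K →ₐ[K] MvPolynomial (Fin m ⊕ Fin m) K :=
  aeval (Sum.elim (fun i => X (Sum.inl i))
    (fun i => X (Sum.inr i) + rename Sum.inl (c i)))

lemma uR_X_inl (c : Fin m → MvPolynomial (Fin m) K) (i : Fin m) :
    uR c (X (Sum.inl i)) = X (Sum.inl i) := by simp [uR]

lemma uR_X_inr (c : Fin m → MvPolynomial (Fin m) K) (i : Fin m) :
    uR c (X (Sum.inr i)) = X (Sum.inr i) + rename Sum.inl (c i) := by simp [uR]

lemma uR_rename (c : Fin m → MvPolynomial (Fin m) K) (p : MvPolynomial (Fin m) K) :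
    uR c (rename Sum.inl p) = rename Sum.inl p := by
  rw [uR, aeval_rename, Sum.elim_comp_inl]
  rw [aeval_unique (rename (R := K) (Sum.inl : Fin m → Fin m ⊕ Fin m))]
  simp [Function.comp_def]

lemma uR_comp (c d : Fin m → MvPolynomial (Fin m) K) :
    (uR c).comp (uR d) = uR (c + d) := by
  apply algHom_ext
  rintro (i | i) <;>
    simp [uR_X_inl, uR_X_inr, uR_rename, map_add, add_assoc]

lemma uR_zero : uR (0 : Fin m → MvPolynomial (Fin m) K) = AlgHom.id K _ := by
  apply algHom_ext
  rintro (i | i) <;> simp [uR_X_inl, uR_X_inr]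

noncomputable def eR (c : Fin m → MvPolynomial (Fin m) K) :
    MvPolynomial (Fin m ⊕ Fin m) K ≃ₐ[K] MvPolynomial (Fin m ⊕ Fin m) K :=
  AlgEquiv.ofAlgHom (uR c) (uR (-c))
    (by rw [uR_comp]; simp [uR_zero]) (by rw [uR_comp]; simp [uR_zero])

lemma eR_apply (c : Fin m → MvPolynomial (Fin m) K) (x) : eR c x = uR c x := rfl

noncomputable def uL (c : Fin m → MvPolynomial (Fin m) K) :
    MvPolynomial (Fin m ⊕ Fin m) K →ₐ[K] MvPolynomial (Fin m ⊕ Fin m) K :=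
  aeval (Sum.elim (fun i => X (Sum.inl i) + rename Sum.inr (c i))
    (fun i => X (Sum.inr i)))

lemma uL_X_inl (c : Fin m → MvPolynomial (Fin m) K) (i : Fin m) :
    uL c (X (Sum.inl i)) = X (Sum.inl i) + rename Sum.inr (c i) := by simp [uL]

lemma uL_X_inr (c : Fin m → MvPolynomial (Fin m) K) (i : Fin m) :
    uL c (X (Sum.inr i)) = X (Sum.inr i) := by simp [uL]

lemma uL_rename (c : Fin m → MvPolynomial (Fin m) K) (p : MvPolynomial (Fin m) K) :
    uL c (rename Sum.inr p) = rename Sum.inr p := by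
  rw [uL, aeval_rename, Sum.elim_comp_inr]
  rw [aeval_unique (rename (R := K) (Sum.inr : Fin m → Fin m ⊕ Fin m))]
  simp [Function.comp_def]

lemma uL_comp (c d : Fin m → MvPolynomial (Fin m) K) :
    (uL c).comp (uL d) = uL (c + d) := by
  apply algHom_ext
  rintro (i | i) <;>
    simp [uL_X_inl, uL_X_inr, uL_rename, map_add, add_assoc]

lemma uL_zero : uL (0 : Fin m → MvPolynomial (Fin m) K) = AlgHom.id K _ := by
  apply algHom_ext
  rintro (i | i) <;> simp [uL_X_inl, uL_X_inr]

noncomputable def eL (c : Fin m → MvPolynomial (Fin m) K) :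
    MvPolynomial (Fin m ⊕ Fin m) K ≃ₐ[K] MvPolynomial (Fin m ⊕ Fin m) K :=
  AlgEquiv.ofAlgHom (uL c) (uL (-c))
    (by rw [uL_comp]; simp [uL_zero]) (by rw [uL_comp]; simp [uL_zero])

lemma eL_apply (c : Fin m → MvPolynomial (Fin m) K) (x) : eL c x = uL c x := rfl

variable {A B : Type*} [CommRing A] [CommRing B] [Algebra K A] [Algebra K B]

lemma key (φ : A ≃ₐ[K] A) (ν : B →ₐ[K] A) (φt : B ≃ₐ[K] B)
    (hs : Surjective ν) (h1 : ∀ x, ν (φt x) = φ (ν x)) :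
    (∀ (n : ℤ) (x : B), ν ((φt ^ n) x) = (φ ^ n) (ν x)) ∧
    (∀ (I J : Ideal A) (n : ℤ),
      J ≤ I.map (φ ^ n : A ≃ₐ[K] A) ↔
        J.comap ν ≤ (I.comap ν).map (φt ^ n : B ≃ₐ[K] B)) := by
  have hsymm : ∀ x, ν (φt.symm x) = φ.symm (ν x) := by
    intro x
    apply φ.injective
    rw [← h1, φt.apply_symm_apply, φ.apply_symm_apply]
  have hz : ∀ (n : ℤ) (x : B), ν ((φt ^ n) x) = (φ ^ n) (ν x) := by
    intro n
    induction n using Int.induction_on with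
    | zero => intro x; simp
    | succ k ih =>
        intro x
        rw [zpow_add_one, zpow_add_one, AlgEquiv.mul_apply, AlgEquiv.mul_apply,
          ih, h1]
    | pred k ih =>
        intro x
        rw [zpow_sub_one, zpow_sub_one, AlgEquiv.mul_apply, AlgEquiv.mul_apply, ih]
        show _ = (φ ^ (-k : ℤ)) (φ.symm (ν x))
        rw [← hsymm]
        rfl
  refine ⟨hz, fun I J n => ?_⟩
  have hzsymm : ∀ x, ν ((φt ^ n).symm x) = (φ ^ n).symm (ν x) := by
    intro x
    apply (φ ^ n).injective
    rw [← hz, (φt ^ n).apply_symm_apply, (φ ^ n).apply_symm_apply]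
  have hmem : ∀ (e : A ≃ₐ[K] A) (I : Ideal A) (x : A), x ∈ I.map e ↔ e.symm x ∈ I := by
    intro e I x
    rw [show I.map e = I.map (e : A ≃+* A) from rfl, ← Ideal.comap_symm]
    rfl
  have hmemB : ∀ (e : B ≃ₐ[K] B) (I : Ideal B) (x : B), x ∈ I.map e ↔ e.symm x ∈ I := by
    intro e I x
    rw [show I.map e = I.map (e : B ≃+* B) from rfl, ← Ideal.comap_symm]
    rfl
  have hkey : (I.comap ν).map (φt ^ n : B ≃ₐ[K] B) =
      (I.map (φ ^ n : A ≃ₐ[K] A)).comap ν := by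
    ext x
    rw [hmemB, Ideal.mem_comap, hzsymm, Ideal.mem_comap, hmem]
  rw [hkey]
  exact (Ideal.comap_le_comap_iff_of_surjective (ν : B →+* A) hs _ _).symm

end Stmt17Aux

open Stmt17Aux

/-- **Proposition 5.2 (via Srinivas's theorem).** Let `A` be a finitely
generated commutative algebra over an infinite field `K` and let `φ : A → A`
be a `K`-algebra automorphism. Then there exist `N`, a surjective `K`-algebra
homomorphism `ν : K[x₁, …, x_N] → A`, and a `K`-algebra automorphism `φ̃` of
`K[x₁, …, x_N]` such that (1) `ν ∘ φ̃ⁿ = φⁿ ∘ ν` for all integers `n`, and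
(2) for all ideals `I`, `J` of `A` and all integers `n`, `φⁿ(I) ⊇ J` iff
`φ̃ⁿ(ν⁻¹(I)) ⊇ ν⁻¹(J)`. -/
theorem stmt17 {K A : Type*} [Field K] [Infinite K] [CommRing A] [Algebra K A]
    [Algebra.FiniteType K A] (φ : A ≃ₐ[K] A) :
    ∃ (N : ℕ) (ν : MvPolynomial (Fin N) K →ₐ[K] A)
      (φt : MvPolynomial (Fin N) K ≃ₐ[K] MvPolynomial (Fin N) K),
      Function.Surjective ν ∧
      (∀ (n : ℤ) (x : MvPolynomial (Fin N) K), ν ((φt ^ n) x) = (φ ^ n) (ν x)) ∧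
      (∀ (I J : Ideal A) (n : ℤ),
        J ≤ I.map (φ ^ n : A ≃ₐ[K] A) ↔
          J.comap ν ≤ (I.comap ν).map
            (φt ^ n : MvPolynomial (Fin N) K ≃ₐ[K] MvPolynomial (Fin N) K)) := by
  obtain ⟨m, ν₀, hν₀⟩ := Algebra.FiniteType.iff_quotient_mvPolynomial''.mp
    (inferInstance : Algebra.FiniteType K A)
  set a : Fin m → A := fun i => ν₀ (X i) with ha
  have hv : ν₀ = aeval a := aeval_unique ν₀
  choose f hf using fun i => hν₀ (φ (a i))
  choose g hg using fun i => hν₀ (φ.symm (a i))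
  -- the surjection from the doubled polynomial ring
  set ν1 : MvPolynomial (Fin m ⊕ Fin m) K →ₐ[K] A :=
    aeval (Sum.elim a fun _ => (0 : A)) with hν1def
  have hν1inl : ∀ i, ν1 (X (Sum.inl i)) = a i := fun i => by simp [hν1def]
  have hν1inr : ∀ i, ν1 (X (Sum.inr i)) = 0 := fun i => by simp [hν1def]
  have hν1ren : ∀ p : MvPolynomial (Fin m) K, ν1 (rename Sum.inl p) = aeval a p := by
    intro p
    rw [hν1def, aeval_rename]
    rfl
  have hν1surj : Surjective ν1 := by
    intro b
    obtain ⟨p, hp⟩ := hν₀ b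
    exact ⟨rename Sum.inl p, by rw [hν1ren, ← hv, hp]⟩
  -- extra computation rule for uR on right-variable polynomials
  have uR_ren_inr : ∀ (p : MvPolynomial (Fin m) K),
      uR f (rename Sum.inr p)
        = aeval (fun j => X (Sum.inr j) + rename Sum.inl (f j)) p := by
    intro p
    rw [uR, aeval_rename]
    rfl
  -- the lifted automorphism on the doubled polynomial ring
  set T1 := eR (K := K) f with hT1
  set T2 := eL (K := K) (fun i => -(g i)) with hT2
  set sw : MvPolynomial (Fin m ⊕ Fin m) K ≃ₐ[K] MvPolynomial (Fin m ⊕ Fin m) K :=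
    renameEquiv K (Equiv.sumComm (Fin m) (Fin m)) with hsw
  set φt1 := (sw.trans T2).trans T1 with hφt1
  have hkey1 : ∀ x, ν1 (φt1 x) = φ (ν1 x) := by
    have hcomp : ν1.comp (φt1 : MvPolynomial (Fin m ⊕ Fin m) K ≃ₐ[K] _).toAlgHom
        = (φ : A ≃ₐ[K] A).toAlgHom.comp ν1 := by
      apply algHom_ext
      rintro (i | i) <;>
        simp only [AlgHom.coe_comp, AlgEquiv.toAlgHom_eq_coe, AlgHom.coe_coe,
          comp_apply, AlgEquiv.coe_algHom]
      · -- x_i ↦ y_i + f_i(x)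
        have e1 : φt1 (X (Sum.inl i)) = X (Sum.inr i) + rename Sum.inl (f i) := by
          rw [hφt1]
          simp only [AlgEquiv.trans_apply, hsw, renameEquiv_apply, rename_X,
            Equiv.sumComm_apply, Sum.swap_inl, hT2, eL_apply, uL_X_inr, hT1,
            eR_apply, uR_X_inr]
        rw [e1, map_add, hν1inr, hν1ren, hν1inl, ← hv, hf, zero_add]
      · -- y_i ↦ x_i - g_i(y + f(x))
        have e2 : φt1 (X (Sum.inr i)) = X (Sum.inl i)
            - aeval (fun j => X (Sum.inr j) + rename Sum.inl (f j)) (g i) := by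
          rw [hφt1]
          simp only [AlgEquiv.trans_apply, hsw, renameEquiv_apply, rename_X,
            Equiv.sumComm_apply, Sum.swap_inr, hT2, eL_apply, uL_X_inl, hT1,
            eR_apply]
          rw [map_add, uR_X_inl, map_neg, map_neg, uR_ren_inr, sub_eq_add_neg]
        rw [e2, map_sub, hν1inl, hν1inr, map_zero, comp_aeval_apply]
        have : (fun j => ν1 (X (Sum.inr j) + rename Sum.inl (f j)))
            = fun j => φ (a j) := by
          funext j
          rw [map_add, hν1inr, hν1ren, ← hv, hf, zero_add]
        rw [this, show (fun j => φ (a j)) = fun j => φ.toAlgHom (a j) from rfl,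
          ← comp_aeval_apply, ← hv, hg]
        simp
    intro x
    exact AlgHom.ext_iff.mp hcomp x
  -- transport to `Fin (m + m)`
  set e : MvPolynomial (Fin m ⊕ Fin m) K ≃ₐ[K] MvPolynomial (Fin (m + m)) K :=
    renameEquiv K finSumFinEquiv with he
  refine ⟨m + m, ν1.comp e.symm.toAlgHom, (e.symm.trans φt1).trans e, ?_⟩
  have hs : Surjective (ν1.comp e.symm.toAlgHom) := hν1surj.comp e.symm.surjective
  have h1 : ∀ x, (ν1.comp e.symm.toAlgHom) (((e.symm.trans φt1).trans e) x)
      = φ ((ν1.comp e.symm.toAlgHom) x) := by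
    intro x
    simp only [AlgHom.coe_comp, AlgEquiv.toAlgHom_eq_coe, AlgHom.coe_coe, comp_apply,
      AlgEquiv.trans_apply, AlgEquiv.symm_apply_apply]
    exact (congrArg ν1 (e.symm_apply_apply _)).trans (hkey1 _)
  obtain ⟨hA, hB⟩ := key φ (ν1.comp e.symm.toAlgHom) ((e.symm.trans φt1).trans e) hs h1
  exact ⟨hs, hA, hB⟩
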